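/- Let F be a totally real number field with ring of integers O, let n ≥ 1, and let α ∈ F be totally positive. Then the minimum of f_α on O^n∖{0} equals the minimum of the scaled trace form φ_α on O∖{0}; in particular m(f_α) = Tr_{F/ℚ}(α η²) for every minimal vector η of φ_α. -/

import Mathlib

open NumberField

private lemma keyQ {F : Type*} [CommRing F] {n : ℕ} (a : Fin n → F) :
    (2 : F) * ∑ i, ∑ j ∈ Finset.Ici i, a i * a j
      = (∑ i, a i) * (∑ i, a i) + ∑ i, a i * a i := by
  classical
  have hswap : (∑ i, ∑ j ∈ Finset.Ici i, a i * a j)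
      = ∑ i : Fin n, ∑ j ∈ Finset.Iic i, a i * a j := by
    rw [Finset.sum_comm' (s' := fun y : Fin n => Finset.Iic y) (t' := Finset.univ)
      (fun x y => by simp)]
    exact Finset.sum_congr rfl fun i _ => Finset.sum_congr rfl fun j _ => mul_comm _ _
  have hsum : ∀ i : Fin n,
      (∑ j ∈ Finset.Ici i, a i * a j) + ∑ j ∈ Finset.Iic i, a i * a j
        = (∑ j, a i * a j) + a i * a i := by
    intro i
    have huniv : Finset.Ici i ∪ Finset.Iic i = Finset.univ := by
      ext j; simp [le_total]
    have hinter : Finset.Ici i ∩ Finset.Iic i = {i} := by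
      ext j
      simp only [Finset.mem_inter, Finset.mem_Ici, Finset.mem_Iic, Finset.mem_singleton]
      constructor
      · rintro ⟨h1, h2⟩; exact le_antisymm h2 h1
      · rintro rfl; exact ⟨le_rfl, le_rfl⟩
    have := Finset.sum_union_inter (s₁ := Finset.Ici i) (s₂ := Finset.Iic i)
      (f := fun j => a i * a j)
    rw [huniv, hinter, Finset.sum_singleton] at this
    linear_combination -this
  calc (2 : F) * ∑ i, ∑ j ∈ Finset.Ici i, a i * a j
      = (∑ i, ∑ j ∈ Finset.Ici i, a i * a j)
        + ∑ i : Fin n, ∑ j ∈ Finset.Iic i, a i * a j := by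
        rw [← hswap]; ring
    _ = ∑ i : Fin n, ((∑ j ∈ Finset.Ici i, a i * a j) + ∑ j ∈ Finset.Iic i, a i * a j) := by
        rw [Finset.sum_add_distrib]
    _ = ∑ i : Fin n, ((∑ j, a i * a j) + a i * a i) := by
        exact Finset.sum_congr rfl fun i _ => hsum i
    _ = (∑ i : Fin n, ∑ j, a i * a j) + ∑ i, a i * a i := by
        rw [Finset.sum_add_distrib]
    _ = (∑ i, a i) * (∑ i, a i) + ∑ i, a i * a i := by
        rw [Finset.sum_mul_sum]

private lemma trPos {F : Type*} [Field F] [NumberField F]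
    (hreal : ∀ v : InfinitePlace F, v.IsReal) {α : F} (hα : ∀ σ : F →+* ℝ, 0 < σ α)
    {x : F} (hx : x ≠ 0) : 0 < Algebra.trace ℚ F (α * x * x) := by
  have h := trace_eq_sum_embeddings (K := ℚ) (L := F) (E := ℂ) (x := α * x * x)
  have hterm : ∀ σ : F →ₐ[ℚ] ℂ, 0 < (σ (α * x * x)).re := by
    intro σ
    have hφr : ComplexEmbedding.IsReal σ.toRingHom :=
      InfinitePlace.isReal_mk_iff.mp (hreal (InfinitePlace.mk σ.toRingHom))
    set r := hφr.embedding with hr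
    have hcoe : ∀ y : F, σ y = ((r y : ℝ) : ℂ) := fun y =>
      (ComplexEmbedding.IsReal.coe_embedding_apply hφr y).symm
    have : σ (α * x * x) = (((r α * r x * r x : ℝ)) : ℂ) := by
      rw [show σ (α * x * x) = σ α * σ x * σ x by simp [map_mul], hcoe α, hcoe x]
      push_cast; ring
    rw [this]
    have hrx : r x ≠ 0 := by
      simpa using (map_ne_zero r).mpr hx
    have : (0:ℝ) < r α * r x * r x := by
      rw [mul_assoc]; exact mul_pos (hα r) (mul_self_pos.mpr hrx)
    simpa using this
  have hne : Nonempty (F →ₐ[ℚ] ℂ) := by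
    have hcard := NumberField.Embeddings.card F ℂ
    have : 0 < Fintype.card (F →+* ℂ) := by
      rw [hcard]; exact Module.finrank_pos
    obtain ⟨φ⟩ := Fintype.card_pos_iff.mp this
    exact ⟨φ.toRatAlgHom⟩
  have hre : ((Algebra.trace ℚ F (α * x * x) : ℚ) : ℝ)
      = ∑ σ : F →ₐ[ℚ] ℂ, (σ (α * x * x)).re := by
    have := congrArg Complex.re h
    simpa [Complex.re_sum] using this
  have hpos : (0:ℝ) < ((Algebra.trace ℚ F (α * x * x) : ℚ) : ℝ) := by
    rw [hre]
    exact Finset.sum_pos (fun σ _ => hterm σ) Finset.univ_nonempty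
  exact_mod_cast hpos

/-- The scaled trace form `φ_α : 𝓞 F → ℚ`, `φ_α(η) = Tr_{F/ℚ}(α η²)`. -/
noncomputable def scaledTraceForm (F : Type*) [Field F] [NumberField F] (α : F)
    (η : RingOfIntegers F) : ℚ :=
  Algebra.trace ℚ F (α * (η : F) * (η : F))

/-- The `n`-ary form `f_α(x₁,…,xₙ) = Tr_{F/ℚ}(α · A_n(x₁,…,xₙ))` on `(𝓞 F)ⁿ`. -/
noncomputable def fAlpha (F : Type*) [Field F] [NumberField F] (n : ℕ) (α : F)
    (v : Fin n → RingOfIntegers F) : ℚ :=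
  Algebra.trace ℚ F (α * ∑ i, ∑ j ∈ Finset.Ici i, (v i : F) * (v j : F))

private lemma denomLemma {F : Type*} [Field F] [NumberField F] (α : F) :
    ∃ y : ℤ, 0 < y ∧ ∀ η : RingOfIntegers F, ∃ k : ℤ,
      (y : ℚ) * scaledTraceForm F α η = (k : ℚ) := by
  have halg : IsAlgebraic ℤ α :=
    (IsFractionRing.isAlgebraic_iff ℤ ℚ F).mpr (Algebra.IsAlgebraic.isAlgebraic α)
  obtain ⟨β, y, hy, hβ⟩ : ∃ β : integralClosure ℤ F, ∃ y ≠ (0 : ℤ), algebraMap ℤ F y * α = β := by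
    obtain ⟨y, hy, hint⟩ := halg.exists_integral_multiple
    exact ⟨⟨y • α, hint⟩, y, hy, (Algebra.smul_def y α).symm⟩
  have main : ∀ η : RingOfIntegers F, ∃ k : ℤ,
      (y : ℚ) * scaledTraceForm F α η = (k : ℚ) := by
    intro η
    have hint : IsIntegral ℤ ((β : F) * (η : F) * (η : F)) :=
      (β.2.mul η.isIntegral_coe).mul η.isIntegral_coe
    have htr : IsIntegral ℤ (Algebra.trace ℚ F ((β : F) * (η : F) * (η : F))) :=
      Algebra.isIntegral_trace hint
    obtain ⟨k, hk⟩ := IsIntegrallyClosed.isIntegral_iff.mp htr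
    refine ⟨k, ?_⟩
    have hsm : ((y : ℚ)) • (α * (η : F) * (η : F)) = (β : F) * (η : F) * (η : F) := by
      rw [Algebra.smul_def]
      have : algebraMap ℚ F ((y : ℚ)) = algebraMap ℤ F y := by
        rw [IsScalarTower.algebraMap_apply ℤ ℚ F y, eq_intCast (algebraMap ℤ ℚ)]
      rw [this, show algebraMap ℤ F y * (α * (η : F) * (η : F))
        = (algebraMap ℤ F y * α) * (η : F) * (η : F) by ring, hβ]
    calc (y : ℚ) * scaledTraceForm F α η
        = Algebra.trace ℚ F (((y : ℚ)) • (α * (η : F) * (η : F))) := by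
          rw [map_smul, smul_eq_mul]; rfl
      _ = Algebra.trace ℚ F ((β : F) * (η : F) * (η : F)) := by rw [hsm]
      _ = (k : ℚ) := by rw [← hk]; simp
  rcases hy.lt_or_gt with hneg | hpos
  · refine ⟨-y, by omega, fun η => ?_⟩
    obtain ⟨k, hk⟩ := main η
    exact ⟨-k, by push_cast; linarith⟩
  · exact ⟨y, hpos, main⟩

private lemma twoF {F : Type*} [Field F] [NumberField F] (n : ℕ) (α : F)
    (v : Fin n → RingOfIntegers F) :
    2 * fAlpha F n α v
      = scaledTraceForm F α (∑ i, v i) + ∑ i, scaledTraceForm F α (v i) := by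
  classical
  set a : Fin n → F := fun i => (v i : F) with ha
  have hcoe : ((∑ i, v i : RingOfIntegers F) : F) = ∑ i, a i := by
    simp [RingOfIntegers.coe_eq_algebraMap, map_sum, ha]
  have hF : ((2 : ℚ)) • (α * ∑ i, ∑ j ∈ Finset.Ici i, a i * a j)
      = α * ((∑ i, v i : RingOfIntegers F) : F) * ((∑ i, v i : RingOfIntegers F) : F)
        + ∑ i, α * a i * a i := by
    rw [Rat.smul_def, hcoe, show ((2:ℚ):F) = 2 by norm_num,
        show (∑ i, α * a i * a i) = α * ∑ i, a i * a i by
          rw [Finset.mul_sum]; exact Finset.sum_congr rfl fun i _ => by ring]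
    linear_combination α * keyQ a
  calc 2 * fAlpha F n α v
      = Algebra.trace ℚ F (((2:ℚ)) • (α * ∑ i, ∑ j ∈ Finset.Ici i, a i * a j)) := by
        rw [map_smul, smul_eq_mul]; rfl
    _ = _ := by
        rw [hF, map_add, map_sum]; rfl

/-- Let `F` be a totally real number field, `n ≥ 1` and `α ∈ F` totally positive.  Then
the minimum of `f_α` on `(𝓞 F)ⁿ ∖ {0}` equals the minimum of the scaled trace form `φ_α`
on `𝓞 F ∖ {0}`; in particular `m(f_α) = Tr_{F/ℚ}(α η²)` for every minimal vector `η` of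
`φ_α`. -/
theorem fAlpha_min_eq_scaledTraceForm_min
    (F : Type*) [Field F] [NumberField F]
    (hreal : ∀ v : InfinitePlace F, v.IsReal)
    (n : ℕ) (hn : 1 ≤ n)
    (α : F) (hα : ∀ σ : F →+* ℝ, 0 < σ α) :
    ∃ c : ℚ,
      IsLeast {q : ℚ | ∃ v : Fin n → RingOfIntegers F, v ≠ 0 ∧ fAlpha F n α v = q} c ∧
      IsLeast {q : ℚ | ∃ η : RingOfIntegers F, η ≠ 0 ∧ scaledTraceForm F α η = q} c ∧
      ∀ η : RingOfIntegers F, η ≠ 0 →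
        (∀ ξ : RingOfIntegers F, ξ ≠ 0 → scaledTraceForm F α η ≤ scaledTraceForm F α ξ) →
        c = Algebra.trace ℚ F (α * (η : F) * (η : F)) := by
  classical
  set S : Set ℚ := {q : ℚ | ∃ η : RingOfIntegers F, η ≠ 0 ∧ scaledTraceForm F α η = q}
    with hS
  -- positivity of φ on nonzero elements
  have hφpos : ∀ η : RingOfIntegers F, η ≠ 0 → 0 < scaledTraceForm F α η := by
    intro η hη
    have : (η : F) ≠ 0 := by
      simpa [RingOfIntegers.coe_eq_algebraMap, RingOfIntegers.coe_eq_zero_iff] using hη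
    exact trPos hreal hα this
  have hφnonneg : ∀ η : RingOfIntegers F, 0 ≤ scaledTraceForm F α η := by
    intro η
    by_cases hη : η = 0
    · simp [hη, scaledTraceForm]
    · exact (hφpos η hη).le
  have hSpos : ∀ q ∈ S, 0 < q := by
    rintro q ⟨η, hη, rfl⟩; exact hφpos η hη
  -- denominators
  obtain ⟨y, hy, hden⟩ := denomLemma (F := F) α
  have hyQ : (0:ℚ) < (y:ℚ) := by exact_mod_cast hy
  -- S is well-ordered on its relevant part: extract a least element
  have hSrep : ∀ q ∈ S, ∃ k : ℕ, 0 < k ∧ q = (k : ℚ) / (y : ℚ) := by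
    rintro q ⟨η, hη, rfl⟩
    obtain ⟨k, hk⟩ := hden η
    have hkpos : 0 < k := by
      have : (0:ℚ) < (k:ℚ) := by
        rw [← hk]; exact mul_pos hyQ (hφpos η hη)
      exact_mod_cast this
    refine ⟨k.toNat, by omega, ?_⟩
    rw [eq_div_iff (ne_of_gt hyQ), mul_comm, hk]
    exact_mod_cast congrArg (fun z : ℤ => (z : ℚ)) (Int.toNat_of_nonneg hkpos.le).symm
  have hSne : S.Nonempty := by
    refine ⟨scaledTraceForm F α 1, 1, one_ne_zero, rfl⟩
  have hNex : ∃ k : ℕ, 0 < k ∧ ((k : ℚ) / (y : ℚ)) ∈ S := by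
    obtain ⟨q, hq⟩ := hSne
    obtain ⟨k, hk, hrep⟩ := hSrep q hq
    exact ⟨k, hk, hrep ▸ hq⟩
  set k0 := Nat.find hNex with hk0
  have hk0spec := Nat.find_spec hNex
  set c : ℚ := (k0 : ℚ) / (y : ℚ) with hc
  have hcS : c ∈ S := hk0spec.2
  have hleastφ : IsLeast S c := by
    refine ⟨hcS, ?_⟩
    intro q hq
    obtain ⟨k, hk, rfl⟩ := hSrep q hq
    have hkk : k0 ≤ k := Nat.find_min' hNex ⟨hk, by exact hq⟩
    rw [div_le_div_iff₀ hyQ hyQ]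
    exact mul_le_mul_of_nonneg_right (by exact_mod_cast hkk) hyQ.le
  have hclb : ∀ ξ : RingOfIntegers F, ξ ≠ 0 → c ≤ scaledTraceForm F α ξ := by
    intro ξ hξ
    exact hleastφ.2 ⟨ξ, hξ, rfl⟩
  -- the f part
  have hleastf : IsLeast {q : ℚ | ∃ v : Fin n → RingOfIntegers F,
      v ≠ 0 ∧ fAlpha F n α v = q} c := by
    constructor
    · -- membership: pad a minimal ξ with zeros
      obtain ⟨ξ, hξ, hξc⟩ := hcS
      set i0 : Fin n := ⟨0, hn⟩ with hi0
      set v : Fin n → RingOfIntegers F := Function.update (0 : Fin n → RingOfIntegers F) i0 ξ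
        with hv
      have hvi0 : v i0 = ξ := by simp [hv]
      have hvne : ∀ i, i ≠ i0 → v i = 0 := by
        intro i hi; simp [hv, Function.update_of_ne hi]
      refine ⟨v, ?_, ?_⟩
      · intro h
        exact hξ (by rw [← hvi0, h]; rfl)
      · have hsum : (∑ i, v i) = ξ := by
          rw [Finset.sum_eq_single i0 (fun i _ hi => hvne i hi) (by simp), hvi0]
        have hsumφ : (∑ i, scaledTraceForm F α (v i)) = scaledTraceForm F α ξ := by
          rw [Finset.sum_eq_single i0
            (fun i _ hi => by rw [hvne i hi]; simp [scaledTraceForm]) (by simp), hvi0]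
        have h2 := twoF n α v
        rw [hsum, hsumφ] at h2
        linarith [h2, hξc]
    · rintro q ⟨v, hv, rfl⟩
      obtain ⟨i0, hvi0⟩ := Function.ne_iff.mp hv
      simp only [Pi.zero_apply] at hvi0
      have h2 := twoF n α v
      by_cases hs : (∑ i, v i) = 0
      · -- two distinct nonzero entries
        have : ∃ i1, i1 ≠ i0 ∧ v i1 ≠ 0 := by
          by_contra hcon
          push_neg at hcon
          have : (∑ i, v i) = v i0 :=
            Finset.sum_eq_single i0 (fun i _ hi => hcon i hi) (by simp)
          exact hvi0 (by rw [← this, hs])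
        obtain ⟨i1, hi1, hvi1⟩ := this
        have hpair : c + c ≤ ∑ i, scaledTraceForm F α (v i) := by
          have hsub : ({i0, i1} : Finset (Fin n)) ⊆ Finset.univ := Finset.subset_univ _
          have := Finset.sum_le_sum_of_subset_of_nonneg hsub
            (fun i _ _ => hφnonneg (v i))
          rw [Finset.sum_pair (Ne.symm hi1)] at this
          calc c + c ≤ scaledTraceForm F α (v i0) + scaledTraceForm F α (v i1) :=
                add_le_add (hclb _ hvi0) (hclb _ hvi1)
            _ ≤ _ := this
        have hzero : scaledTraceForm F α (∑ i, v i) = 0 := by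
          rw [hs]; simp [scaledTraceForm]
        rw [hzero] at h2
        linarith
      · have hterm : c ≤ scaledTraceForm F α (v i0) := hclb _ hvi0
        have hsum : scaledTraceForm F α (v i0) ≤ ∑ i, scaledTraceForm F α (v i) :=
          Finset.single_le_sum (fun i _ => hφnonneg (v i)) (Finset.mem_univ i0)
        have hs' : c ≤ scaledTraceForm F α (∑ i, v i) := hclb _ hs
        linarith
  refine ⟨c, hleastf, hleastφ, ?_⟩
  intro η hη hmin
  obtain ⟨ξ, hξ, hξc⟩ := hcS
  have h1 : scaledTraceForm F α η ≤ c := hξc ▸ hmin ξ hξ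
  have h2 : c ≤ scaledTraceForm F α η := hclb η hη
  have : c = scaledTraceForm F α η := le_antisymm h2 h1
  exact this
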